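/- Let μ be the two-point mixture on [0,1]² given by the joint density of two rows of a one-dimensional Latin hypercube sample of size N: f(z_1, z_2) = (N/(N-1)) · (1 - G_N(z_1, z_2)), where G_N(z_1, z_2) = 1 if ⌊N z_1⌋ = ⌊N z_2⌋ and 0 otherwise. Then for any integrable g : [0,1] → ℝ with ∫_0^1 g = 0, the covariance under this density satisfies ∫∫ g(z_1) g(z_2) f(z_1, z_2) dz_1 dz_2 = -(N/(N-1)) Σ_{j=1}^N (∫_{I_j} g)² ≤ 0, where I_j = [(j-1)/N, j/N]. In particular, distinct Latin hypercube sample points are negatively correlated for any centered integrable function. -/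
import Mathlib


open MeasureTheory Set

/-- The uniform distribution on `[0,1]`. -/
noncomputable def unif : Measure ℝ := (volume : Measure ℝ).restrict (Icc 0 1)

/-- Same-stratum indicator: `G_N(y₁,y₂) = 1` if `⌊N y₁⌋ = ⌊N y₂⌋`, else `0`. -/
noncomputable def Gind (N : ℕ) (y₁ y₂ : ℝ) : ℝ :=
  if ⌊(N : ℝ) * y₁⌋ = ⌊(N : ℝ) * y₂⌋ then 1 else 0

lemma stratum_mem_iff (N : ℕ) (hN : 0 < (N : ℝ)) (k : ℤ) (y : ℝ) :
    ⌊(N : ℝ) * y⌋ = k ↔ y ∈ Ico ((k : ℝ)/N) (((k : ℝ)+1)/N) := by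
  rw [Int.floor_eq_iff, mem_Ico, div_le_iff₀ hN, lt_div_iff₀ hN, mul_comm (N:ℝ) y]

/-- **Negative correlation of distinct Latin hypercube points.** Under the joint density
`f(z₁,z₂) = (N/(N-1))(1 - G_N(z₁,z₂))` of two rows of a one-dimensional Latin hypercube
sample of size `N`, for any integrable `g : [0,1] → ℝ` with `∫₀¹ g = 0` one has
`∫∫ g(z₁) g(z₂) f(z₁,z₂) dz₁ dz₂ = -(N/(N-1)) Σ_{j=1}^N (∫_{I_j} g)² ≤ 0`,
where `I_j = [(j-1)/N, j/N]`. -/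
theorem stmt_19 (N : ℕ) (hN : 2 ≤ N)
    (f : ℝ → ℝ → ℝ)
    (hf : ∀ z₁ z₂, f z₁ z₂ = ((N : ℝ)/((N : ℝ) - 1)) * (1 - Gind N z₁ z₂))
    (g : ℝ → ℝ) (hg : Integrable g unif) (hmean : ∫ z, g z ∂unif = 0) :
    (∫ z₁, ∫ z₂, g z₁ * g z₂ * f z₁ z₂ ∂unif ∂unif
      = -((N : ℝ)/((N : ℝ) - 1)) *
          ∑ j ∈ Finset.range N, (∫ z in ((j : ℝ)/N)..(((j : ℝ)+1)/N), g z)^2) ∧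
    (∫ z₁, ∫ z₂, g z₁ * g z₂ * f z₁ z₂ ∂unif ∂unif ≤ 0) := by
  have hN0 : (0 : ℝ) < (N : ℝ) := by
    have : (2:ℝ) ≤ (N:ℝ) := by exact_mod_cast hN
    linarith
  set c : ℝ := (N : ℝ)/((N : ℝ) - 1) with hc
  have hc0 : 0 ≤ c := by
    apply div_nonneg hN0.le
    have : (2:ℝ) ≤ (N:ℝ) := by exact_mod_cast hN
    linarith
  -- stratum sets
  set S : ℤ → Set ℝ := fun k => Ico ((k : ℝ)/N) (((k : ℝ)+1)/N) with hS
  -- stratum integrals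
  set a : ℕ → ℝ := fun k => ∫ z in S (k:ℤ), g z with ha
  -- Step A: compute the inner integral for every z₁
  have inner_eq : ∀ z₁ : ℝ, (∫ z₂, g z₁ * g z₂ * f z₁ z₂ ∂unif)
      = -c * g z₁ * ∫ z₂ in S ⌊(N:ℝ) * z₁⌋, g z₂ ∂unif := by
    intro z₁
    set k := ⌊(N:ℝ) * z₁⌋ with hk
    have hpt : ∀ z₂, g z₁ * g z₂ * f z₁ z₂
        = (c * g z₁) * g z₂ - (c * g z₁) * (S k).indicator g z₂ := by
      intro z₂
      rw [hf]
      unfold Gind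
      by_cases h : z₂ ∈ S k
      · have : ⌊(N:ℝ) * z₂⌋ = k := (stratum_mem_iff N hN0 k z₂).mpr h
        rw [if_pos this.symm, indicator_of_mem h]
        ring
      · have hne : ¬ (⌊(N:ℝ) * z₁⌋ = ⌊(N:ℝ) * z₂⌋) := by
          intro he
          exact h ((stratum_mem_iff N hN0 k z₂).mp (by rw [← he]))
        rw [if_neg hne, indicator_of_notMem h]
        ring
    simp only [hpt]
    rw [integral_sub (hg.const_mul _) ((hg.indicator measurableSet_Ico).const_mul _),
      integral_const_mul, integral_const_mul, hmean,
      integral_indicator measurableSet_Ico]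
    ring
  -- Basic facts about strata for k < N
  have hsub : ∀ k : ℕ, k < N → S (k:ℤ) ⊆ Icc 0 1 := by
    intro k hk y hy
    obtain ⟨h1, h2⟩ := hy
    constructor
    · refine le_trans ?_ h1
      push_cast
      positivity
    · refine le_of_lt (lt_of_lt_of_le h2 ?_)
      push_cast
      rw [div_le_one hN0]
      exact_mod_cast hk
  have hsub' : ∀ k : ℕ, k < N → S (k:ℤ) ⊆ Ico 0 1 := by
    intro k hk y hy
    obtain ⟨h1, h2⟩ := hy
    constructor
    · refine le_trans ?_ h1
      push_cast
      positivity
    · refine lt_of_lt_of_le h2 ?_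
      push_cast
      rw [div_le_one hN0]
      exact_mod_cast hk
  -- for k < N, the unif-integral over the stratum equals the volume integral
  have hus : ∀ k : ℕ, k < N → (∫ z in S (k:ℤ), g z ∂unif) = a k := by
    intro k hk
    show (∫ z in S (k:ℤ), g z ∂((volume : Measure ℝ).restrict (Icc 0 1))) = a k
    rw [Measure.restrict_restrict measurableSet_Ico,
      inter_eq_self_of_subset_left (hsub k hk)]
  -- The auxiliary function ψ
  set ψ : ℝ → ℝ := fun z =>
    ∑ k ∈ Finset.range N, (S (k:ℤ)).indicator (fun z => (-c * a k) * g z) z with hψ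
  -- Inner integral equals ψ on Ico 0 1
  have hIψ : ∀ z ∈ Ico (0:ℝ) 1, (∫ z₂, g z * g z₂ * f z z₂ ∂unif) = ψ z := by
    intro z hz
    obtain ⟨hz0, hz1⟩ := hz
    have hkz0 : (0:ℤ) ≤ ⌊(N:ℝ) * z⌋ := by
      apply Int.le_floor.mpr
      push_cast
      positivity
    set m : ℕ := (⌊(N:ℝ) * z⌋).toNat with hm
    have hmz : (m : ℤ) = ⌊(N:ℝ) * z⌋ := Int.toNat_of_nonneg hkz0
    have hmN : m < N := by
      have : ⌊(N:ℝ) * z⌋ < (N:ℤ) := by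
        apply Int.floor_lt.mpr
        push_cast
        nlinarith
      omega
    have hzm : z ∈ S (m:ℤ) := by
      rw [← stratum_mem_iff N hN0]
      exact hmz.symm
    have hψz : ψ z = -c * a m * g z := by
      have hsum := Finset.sum_eq_single_of_mem (s := Finset.range N)
        (f := fun k => (S (k:ℤ)).indicator (fun z => -c * a k * g z) z)
        m (Finset.mem_range.mpr hmN)
        (by
          intro j hj hjm
          apply indicator_of_notMem
          intro hzj
          apply hjm
          have h1 : ⌊(N:ℝ) * z⌋ = (j:ℤ) := (stratum_mem_iff N hN0 _ z).mpr hzj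
          have h2 : ⌊(N:ℝ) * z⌋ = (m:ℤ) := hmz.symm
          omega)
      simp only [hψ]
      rw [hsum]
      exact indicator_of_mem hzm _
    rw [inner_eq z, ← hmz, hus m hmN, hψz]
    ring
  -- integrability of g on Ico 0 1
  have hgI : Integrable g ((volume : Measure ℝ).restrict (Ico 0 1)) :=
    hg.mono_measure (Measure.restrict_mono Ico_subset_Icc_self le_rfl)
  -- main computation
  have key : (∫ z₁, ∫ z₂, g z₁ * g z₂ * f z₁ z₂ ∂unif ∂unif)
      = -c * ∑ k ∈ Finset.range N, (a k)^2 := by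
    have e1 : (∫ z₁, ∫ z₂, g z₁ * g z₂ * f z₁ z₂ ∂unif ∂unif)
        = ∫ z₁ in Ico (0:ℝ) 1, ∫ z₂, g z₁ * g z₂ * f z₁ z₂ ∂unif := by
      show (∫ z₁ in Icc (0:ℝ) 1, ∫ z₂, g z₁ * g z₂ * f z₁ z₂ ∂unif) = _
      exact (setIntegral_congr_set Ico_ae_eq_Icc).symm
    rw [e1, setIntegral_congr_fun measurableSet_Ico hIψ, hψ]
    rw [integral_finset_sum]
    · have e2 : ∀ k ∈ Finset.range N,
          (∫ z in Ico (0:ℝ) 1, (S (k:ℤ)).indicator (fun z => (-c * a k) * g z) z)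
          = -c * (a k)^2 := by
        intro k hk
        rw [integral_indicator measurableSet_Ico,
          Measure.restrict_restrict measurableSet_Ico,
          inter_eq_self_of_subset_left (hsub' k (Finset.mem_range.mp hk)),
          integral_const_mul]
        ring
      rw [Finset.sum_congr rfl e2, ← Finset.mul_sum]
    · intro k hk
      exact ((hgI.const_mul _).indicator measurableSet_Ico)
  -- relate a to interval integrals
  have hak : ∀ j : ℕ, (∫ z in ((j : ℝ)/N)..(((j : ℝ)+1)/N), g z) = a j := by
    intro j
    have hle : (j : ℝ)/N ≤ ((j : ℝ)+1)/N := by gcongr; linarith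
    have hcast : ((j:ℤ):ℝ) = (j:ℝ) := by push_cast; ring
    rw [intervalIntegral.integral_of_le hle, integral_Ioc_eq_integral_Ioo, ha]
    show _ = ∫ z in Ico (((j:ℤ):ℝ)/N) ((((j:ℤ):ℝ)+1)/N), g z
    rw [hcast, integral_Ico_eq_integral_Ioo]
  constructor
  · rw [key]
    congr 1
    apply Finset.sum_congr rfl
    intro j _
    rw [hak j]
  · rw [key]
    have : 0 ≤ ∑ k ∈ Finset.range N, (a k)^2 :=
      Finset.sum_nonneg fun k _ => sq_nonneg _
    nlinarith
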